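/- If S is a clique and T is a coclique in a connected graph G on n vertices whose adjacency matrix belongs to a homogeneous coherent configuration, then |S|·|T| ≤ n. -/

import Mathlib

open Matrix

section Aux

open scoped ComplexOrder in
lemma quad_re_nonneg_of_eigenvalues_nonneg {N : ℕ} {M : Matrix (Fin N) (Fin N) ℂ}
    (hM : M.IsHermitian) (hev : ∀ i, 0 ≤ hM.eigenvalues i) (z : Fin N → ℂ) :
    0 ≤ (dotProduct (star z) (M *ᵥ z)).re := by
  have h := (hM.posSemidef_iff_eigenvalues_nonneg.mpr hev).dotProduct_mulVec_nonneg z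
  exact (Complex.le_def.mp h).1

end Aux

set_option maxHeartbeats 1000000

/-- Clique-coclique bound for connected graphs in a homogeneous coherent
configuration: if S is a clique and T a coclique, then |S|·|T| ≤ n. -/
theorem clique_coclique_coherent {n d : ℕ}
    (G : SimpleGraph (Fin n)) [DecidableRel G.Adj]
    (hconn : G.Connected)
    (A : Fin (d + 1) → Matrix (Fin n) (Fin n) ℂ)
    (hA0 : A 0 = 1)
    (h01 : ∀ r, ∀ i j, A r i j = 0 ∨ A r i j = 1)
    (hsum : ∑ r, A r = Matrix.of fun _ _ => (1 : ℂ))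
    (hdiag : ∀ r, (∀ i j : Fin n, i ≠ j → A r i j = 0) ∨ (∀ i : Fin n, A r i i = 0))
    (htrans : ∀ r, ∃ s, (A r)ᵀ = A s)
    (hprod : ∀ r s, ∃ c : Fin (d + 1) → ℂ, A r * A s = ∑ t, c t • A t)
    (R : Finset (Fin (d + 1))) (hR : (0 : Fin (d + 1)) ∉ R)
    (hadj : G.adjMatrix ℂ = ∑ r ∈ R, A r)
    (S T : Finset (Fin n))
    (hS : G.IsClique (S : Set (Fin n)))
    (hT : ∀ u ∈ T, ∀ v ∈ T, ¬ G.Adj u v) :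
    S.card * T.card ≤ n := by
  classical
  have hn : 0 < n := by
    obtain ⟨v⟩ := hconn.nonempty
    exact v.pos
  have hn' : (n : ℂ) ≠ 0 := by exact_mod_cast hn.ne'
  -- entrywise sum is 1
  have hsum' : ∀ i j : Fin n, ∑ r, A r i j = 1 := by
    intro i j
    have := congrFun (congrFun (congrArg (fun M => M) hsum) i) j
    simpa [Matrix.sum_apply] using congrFun (congrFun hsum i) j
  -- counting lemma for index sums
  have hcard : ∀ (F : Finset (Fin (d + 1))) (i j : Fin n),
      ∑ r ∈ F, A r i j = ((F.filter fun r => A r i j = 1).card : ℂ) := by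
    intro F i j
    rw [Finset.card_filter]
    push_cast
    refine Finset.sum_congr rfl fun r _ => ?_
    rcases h01 r i j with h | h <;> simp [h]
  -- unique class for each pair
  have huniq : ∀ i j : Fin n, ∃! r, A r i j = 1 := by
    intro i j
    have h1 : ((Finset.univ.filter fun r => A r i j = 1).card : ℂ) = 1 := by
      rw [← hcard]; exact hsum' i j
    have h2 : (Finset.univ.filter fun r => A r i j = 1).card = 1 := by exact_mod_cast h1
    obtain ⟨r, hr⟩ := Finset.card_eq_one.mp h2
    have hrmem : A r i j = 1 := by
      have hr' : r ∈ ({r} : Finset (Fin (d + 1))) := Finset.mem_singleton_self r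
      rw [← hr] at hr'
      simpa using (Finset.mem_filter.mp hr').2
    refine ⟨r, hrmem, fun s hs => ?_⟩
    have : s ∈ Finset.univ.filter (fun t => A t i j = 1) := by
      simp [hs]
    rw [hr] at this; simpa using this
  have hzero : ∀ i j : Fin n, ∀ r s, A r i j = 1 → s ≠ r → A s i j = 0 := by
    intro i j r s h1 hne
    rcases h01 s i j with h | h
    · exact h
    · exact absurd ((huniq i j).unique h h1) hne
  -- off-diagonal classes have zero diagonal
  have hdiag0 : ∀ r, r ≠ 0 → ∀ i, A r i i = 0 := by
    intro r hr i
    have h0 : A 0 i i = 1 := by rw [hA0]; simp [Matrix.one_apply]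
    exact hzero i i 0 r h0 hr
  -- constant row sums
  have hrow : ∀ r, ∀ i i' : Fin n, ∑ j, A r i j = ∑ j, A r i' j := by
    have key : ∀ r, ∃ k : ℂ, ∀ i, ∑ j, A r i j = k := by
      intro r
      obtain ⟨s, hs⟩ := htrans r
      obtain ⟨c, hc⟩ := hprod r s
      refine ⟨c 0, fun i => ?_⟩
      have h1 : (A r * A s) i i = ∑ j, A r i j := by
        rw [Matrix.mul_apply]
        refine Finset.sum_congr rfl fun j _ => ?_
        have : A s j i = A r i j := by rw [← hs]; rfl
        rw [this]
        rcases h01 r i j with h | h <;> simp [h]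
      have h2 : (∑ t, c t • A t) i i = c 0 := by
        rw [Matrix.sum_apply]
        rw [Finset.sum_eq_single 0]
        · simp [hA0, Matrix.one_apply]
        · intro t _ ht
          simp [hdiag0 t ht i]
        · simp
      rw [hc] at h1
      rw [← h1, h2]
    intro r i i'
    obtain ⟨k, hk⟩ := key r
    rw [hk, hk]
  -- natural number counts
  set cTn : Fin (d + 1) → ℕ :=
    fun r => ((T ×ˢ T).filter fun p => A r p.1 p.2 = 1).card with hcTn_def
  set Nn : Fin (d + 1) → ℕ :=
    fun r => ((Finset.univ ×ˢ Finset.univ : Finset (Fin n × Fin n)).filter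
      fun p => A r p.1 p.2 = 1).card with hNn_def
  have hcount : ∀ (F : Finset (Fin n × Fin n)) r,
      ∑ p ∈ F, A r p.1 p.2 = ((F.filter fun p => A r p.1 p.2 = 1).card : ℂ) := by
    intro F r
    rw [Finset.card_filter]
    push_cast
    refine Finset.sum_congr rfl fun p _ => ?_
    rcases h01 r p.1 p.2 with h | h <;> simp [h]
  have hcT : ∀ r, ∑ u ∈ T, ∑ v ∈ T, A r u v = (cTn r : ℂ) := by
    intro r
    refine (Finset.sum_product' _ _ (fun u v => A r u v)).symm.trans ?_
    exact hcount _ r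
  have hNt : ∀ r, ∑ i, ∑ j, A r i j = (Nn r : ℂ) := by
    intro r
    refine (Finset.sum_product' _ _ (fun u v => A r u v)).symm.trans ?_
    exact hcount _ r
  have hcT_le : ∀ r, cTn r ≤ Nn r := by
    intro r
    exact Finset.card_le_card (Finset.filter_subset_filter _
      (Finset.subset_univ (T ×ˢ T) |>.trans (by simp [Finset.subset_iff])))
  -- the weights
  set w : Fin (d + 1) → ℝ := fun r => (cTn r : ℝ) / (Nn r : ℝ) with hw_def
  have hwN : ∀ r, (w r) * (Nn r : ℝ) = (cTn r : ℝ) := by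
    intro r
    rcases Nat.eq_zero_or_pos (Nn r) with h | h
    · have : cTn r = 0 := Nat.le_zero.mp (h ▸ hcT_le r)
      simp [hw_def, h, this]
    · simp only [hw_def]; field_simp [Nat.cast_ne_zero.mpr h.ne']
  set M : Matrix (Fin n) (Fin n) ℂ := ∑ r, (w r : ℂ) • A r with hM_def
  have hMapp : ∀ i j r, A r i j = 1 → M i j = (w r : ℂ) := by
    intro i j r h
    rw [hM_def, Matrix.sum_apply]
    rw [Finset.sum_eq_single r]
    · simp [h]
    · intro s _ hs
      simp [hzero i j r s h hs]
    · simp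
  have hclass : ∀ i j : Fin n, ∃ r, A r i j = 1 := fun i j => ⟨(huniq i j).exists.choose, (huniq i j).exists.choose_spec⟩
  -- transpose invariance of coefficients
  have htransw : ∀ r s, (A r)ᵀ = A s → w s = w r := by
    intro r s hs
    have h1 : cTn s = cTn r := by
      have : (cTn s : ℂ) = (cTn r : ℂ) := by
        rw [← hcT, ← hcT]
        refine Finset.sum_comm.trans ?_
        refine Finset.sum_congr rfl fun u _ => Finset.sum_congr rfl fun v _ => ?_
        rw [← hs]; rfl
      exact_mod_cast this
    have h2 : Nn s = Nn r := by
      have : (Nn s : ℂ) = (Nn r : ℂ) := by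
        rw [← hNt, ← hNt]
        refine Finset.sum_comm.trans ?_
        refine Finset.sum_congr rfl fun u _ => Finset.sum_congr rfl fun v _ => ?_
        rw [← hs]; rfl
      exact_mod_cast this
    simp only [hw_def, h1, h2]
  have hMsymm : ∀ i j, M i j = M j i := by
    intro i j
    obtain ⟨r, hr⟩ := hclass i j
    obtain ⟨s, hs⟩ := htrans r
    have hsji : A s j i = 1 := by rw [← hs]; exact hr
    rw [hMapp i j r hr, hMapp j i s hsji, htransw r s hs]
  have hMreal : ∀ i j, M i j = ((M i j).re : ℂ) := by
    intro i j
    obtain ⟨r, hr⟩ := hclass i j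
    rw [hMapp i j r hr]
    simp
  have hMherm : M.IsHermitian := by
    ext i j
    rw [Matrix.conjTranspose_apply, hMsymm j i]
    rw [hMreal i j]
    simp
  -- the adjacency algebra
  set 𝒜 : Submodule ℂ (Matrix (Fin n) (Fin n) ℂ) := Submodule.span ℂ (Set.range A) with h𝒜_def
  have hone_mem : (1 : Matrix (Fin n) (Fin n) ℂ) ∈ 𝒜 := Submodule.subset_span ⟨0, hA0⟩
  have hM_mem : M ∈ 𝒜 := by
    rw [hM_def]
    exact Submodule.sum_mem _ fun r _ =>
      Submodule.smul_mem _ _ (Submodule.subset_span ⟨r, rfl⟩)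
  have hmul_gen : ∀ r, ∀ Y ∈ 𝒜, A r * Y ∈ 𝒜 := by
    intro r Y hY
    refine Submodule.span_induction ?_ ?_ ?_ ?_ hY
    · rintro Z ⟨s, rfl⟩
      obtain ⟨c, hc⟩ := hprod r s
      rw [hc]
      exact Submodule.sum_mem _ fun t _ =>
        Submodule.smul_mem _ _ (Submodule.subset_span ⟨t, rfl⟩)
    · rw [mul_zero]; exact Submodule.zero_mem _
    · intro Z1 Z2 _ _ p1 p2
      rw [mul_add]; exact Submodule.add_mem _ p1 p2
    · intro a Z _ pZ
      rw [mul_smul_comm]; exact Submodule.smul_mem _ _ pZ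
  have hmulmem : ∀ X ∈ 𝒜, ∀ Y ∈ 𝒜, X * Y ∈ 𝒜 := by
    intro X hX
    refine Submodule.span_induction ?_ ?_ ?_ ?_ hX
    · rintro Z ⟨r, rfl⟩
      exact hmul_gen r
    · intro Y _; rw [zero_mul]; exact Submodule.zero_mem _
    · intro Z1 Z2 _ _ p1 p2 Y hY
      rw [add_mul]; exact Submodule.add_mem _ (p1 Y hY) (p2 Y hY)
    · intro a Z _ pZ Y hY
      rw [smul_mul_assoc]; exact Submodule.smul_mem _ _ (pZ Y hY)
  -- the trace identity
  have htr : ∀ X ∈ 𝒜, Matrix.trace (X * M) = ∑ u ∈ T, ∑ v ∈ T, X u v := by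
    intro X hX
    refine Submodule.span_induction ?_ ?_ ?_ ?_ hX
    · rintro Z ⟨r, rfl⟩
      have hL : Matrix.trace (A r * M) = (w r : ℂ) * (Nn r : ℂ) := by
        rw [Matrix.trace]
        have h1 : ∀ i, (A r * M).diag i = ∑ j, A r i j * M i j := by
          intro i
          rw [Matrix.diag_apply, Matrix.mul_apply]
          exact Finset.sum_congr rfl fun j _ => by rw [hMsymm j i]
        rw [Finset.sum_congr rfl fun i _ => h1 i]
        have h2 : ∀ i j, A r i j * M i j = (w r : ℂ) * A r i j := by
          intro i j
          rcases h01 r i j with h | h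
          · simp [h]
          · rw [h, hMapp i j r h]; ring
        calc ∑ i, ∑ j, A r i j * M i j
            = ∑ i, ∑ j, (w r : ℂ) * A r i j :=
              Finset.sum_congr rfl fun i _ => Finset.sum_congr rfl fun j _ => h2 i j
          _ = (w r : ℂ) * ∑ i, ∑ j, A r i j := by
              simp [Finset.mul_sum]
          _ = (w r : ℂ) * (Nn r : ℂ) := by rw [hNt r]
      rw [hL, hcT r]
      exact_mod_cast hwN r
    · simp
    · intro Z1 Z2 _ _ p1 p2
      rw [add_mul, Matrix.trace_add, p1, p2]
      simp [Matrix.add_apply, Finset.sum_add_distrib]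
    · intro a Z _ pZ
      rw [smul_mul_assoc, Matrix.trace_smul, pZ]
      simp [Matrix.smul_apply, Finset.mul_sum, smul_eq_mul]
  -- row sums of M
  have hrowM : ∀ i, ∑ j, M i j = (T.card : ℂ) ^ 2 / n := by
    intro i
    have h1 : ∑ j, M i j = ∑ r, (w r : ℂ) * (∑ j, A r i j) := by
      simp only [hM_def, Matrix.sum_apply, Matrix.smul_apply, smul_eq_mul]
      rw [Finset.sum_comm]
      simp [Finset.mul_sum]
    have h2 : ∀ r, (w r : ℂ) * (∑ j, A r i j) = (cTn r : ℂ) / n := by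
      intro r
      have hNr : (Nn r : ℂ) = n * (∑ j, A r i j) := by
        rw [← hNt r, Finset.sum_congr rfl fun i' _ => hrow r i' i]
        simp [Finset.sum_const, Finset.card_univ, mul_comm]
      have h3 : (∑ j, A r i j) = (Nn r : ℂ) / n := by
        rw [hNr]; field_simp
      rw [h3, ← mul_div_assoc]
      congr 1
      exact_mod_cast hwN r
    rw [h1, Finset.sum_congr rfl fun r _ => h2 r, ← Finset.sum_div]
    congr 1
    have h4 : ∑ r, (cTn r : ℂ) = ∑ u ∈ T, ∑ v ∈ T, ∑ r, A r u v := by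
      rw [Finset.sum_congr rfl fun r (_ : r ∈ Finset.univ) => (hcT r).symm]
      rw [Finset.sum_comm]
      exact Finset.sum_congr rfl fun u _ => Finset.sum_comm
    rw [h4]
    simp [hsum', Finset.sum_const, sq]
  -- diagonal entries of M
  have hMdiag : ∀ i, M i i = (T.card : ℂ) / n := by
    intro i
    have h0 : A 0 i i = 1 := by rw [hA0]; simp [Matrix.one_apply]
    rw [hMapp i i 0 h0]
    have hc0 : (cTn 0 : ℂ) = T.card := by
      rw [← hcT 0, hA0]
      simp [Matrix.one_apply]
    have hN0 : (Nn 0 : ℂ) = n := by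
      rw [← hNt 0, hA0]
      simp [Matrix.one_apply]
    have hc0' : cTn 0 = T.card := by exact_mod_cast hc0
    have hN0' : Nn 0 = n := by exact_mod_cast hN0
    simp only [hw_def, hc0', hN0']
    push_cast
    rfl
  -- entries of M on edges of the clique vanish
  have hMoff : ∀ i ∈ S, ∀ j ∈ S, i ≠ j → M i j = 0 := by
    intro i hi j hj hij
    have hadj' : G.Adj i j := hS (Finset.mem_coe.mpr hi) (Finset.mem_coe.mpr hj) hij
    have h1 : ∑ r ∈ R, A r i j = 1 := by
      have h := congrFun (congrFun hadj i) j
      rw [Matrix.sum_apply] at h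
      rw [← h]
      simp [hadj']
    rw [hcard R i j] at h1
    have h1' : (R.filter fun r => A r i j = 1).card = 1 := by exact_mod_cast h1
    obtain ⟨r, hr⟩ := Finset.card_eq_one.mp h1'
    have hrR : r ∈ R ∧ A r i j = 1 := by
      have : r ∈ R.filter fun r => A r i j = 1 := by rw [hr]; exact Finset.mem_singleton_self r
      exact ⟨(Finset.mem_filter.mp this).1, (Finset.mem_filter.mp this).2⟩
    have hr0 : r ≠ 0 := fun h => hR (h ▸ hrR.1)
    rw [hMapp i j r hrR.2]
    have hcTr : cTn r = 0 := by
      rw [hcTn_def]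
      simp only [Finset.card_eq_zero]
      rw [Finset.filter_eq_empty_iff]
      intro p hp
      obtain ⟨hu, hv⟩ := Finset.mem_product.mp hp
      by_cases huv : p.1 = p.2
      · rw [huv, hdiag0 r hr0 p.2]
        simp
      · have hnadj := hT _ hu _ hv
        have h2 : ∑ r' ∈ R, A r' p.1 p.2 = 0 := by
          have := congrFun (congrFun hadj p.1) p.2
          rw [Matrix.sum_apply] at this
          rw [← this]
          simp [SimpleGraph.adjMatrix_apply, hnadj]
        rw [hcard R p.1 p.2] at h2
        have h2' : (R.filter fun r' => A r' p.1 p.2 = 1).card = 0 := by exact_mod_cast h2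
        intro hone
        have : r ∈ R.filter fun r' => A r' p.1 p.2 = 1 := Finset.mem_filter.mpr ⟨hrR.1, hone⟩
        rw [Finset.card_eq_zero.mp h2'] at this
        simp at this
    simp [hw_def, hcTr]
  -- eigenvalues of M are nonnegative
  have hev : ∀ i, 0 ≤ hMherm.eigenvalues i := by
    by_contra hneg
    push_neg at hneg
    obtain ⟨i0, hi0⟩ := hneg
    set lam : Fin n → ℝ := hMherm.eigenvalues with hlam_def
    set μ : ℝ := lam i0 with hmu_def
    set q : Polynomial ℝ :=
      Lagrange.interpolate (Finset.image lam Finset.univ) id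
        (fun z => if z = μ then 1 else 0) with hq_def
    have hqeval : ∀ i, q.eval (lam i) = if lam i = μ then 1 else 0 := by
      intro i
      have h := Lagrange.eval_interpolate_at_node (v := id)
        (r := fun z => if z = μ then 1 else 0) (Set.injOn_id _)
        (Finset.mem_image_of_mem lam (Finset.mem_univ i))
      simpa [hq_def] using h
    set U : Matrix (Fin n) (Fin n) ℂ :=
      (Matrix.IsHermitian.eigenvectorUnitary hMherm : Matrix (Fin n) (Fin n) ℂ) with hU_def
    have hUmem := (Matrix.IsHermitian.eigenvectorUnitary hMherm).2
    have hU1 : U * star U = 1 := Matrix.mem_unitaryGroup_iff.mp hUmem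
    have hU2 : star U * U = 1 := Matrix.mem_unitaryGroup_iff'.mp hUmem
    set f : Fin n → ℂ := RCLike.ofReal ∘ lam with hf_def
    have hf : ∀ i, f i = ((lam i : ℝ) : ℂ) := fun i => rfl
    have hspec : M = U * Matrix.diagonal f * star U := hMherm.spectral_theorem
    have hstarU_mul : ∀ X : Matrix (Fin n) (Fin n) ℂ, star U * (U * X) = X := by
      intro X; rw [← mul_assoc, hU2, one_mul]
    set φ : Matrix (Fin n) (Fin n) ℂ →ₐ[ℝ] Matrix (Fin n) (Fin n) ℂ :=
      { toFun := fun X => U * X * star U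
        map_one' := by
          show U * 1 * star U = 1
          rw [mul_one, hU1]
        map_mul' := by
          intro X Y
          show U * (X * Y) * star U = U * X * star U * (U * Y * star U)
          simp only [mul_assoc]
          rw [hstarU_mul]
        map_zero' := by simp
        map_add' := by intro X Y; simp [mul_add, add_mul]
        commutes' := by
          intro r
          show U * (algebraMap ℝ (Matrix (Fin n) (Fin n) ℂ) r) * star U = _
          rw [Algebra.algebraMap_eq_smul_one, mul_smul_comm, smul_mul_assoc, mul_one, hU1,
            ← Algebra.algebraMap_eq_smul_one] } with hφ_def
    have hφ : ∀ X, φ X = U * X * star U := fun _ => rfl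
    set B : Matrix (Fin n) (Fin n) ℂ := Polynomial.aeval M q with hB_def
    set g : Fin n → ℂ := fun i => ((q.eval (lam i) : ℝ) : ℂ) with hg_def
    have hBdiag : B = U * Matrix.diagonal g * star U := by
      have h1 : M = φ (Matrix.diagonal f) := by rw [hφ]; exact hspec
      have h2 : (Polynomial.aeval (Matrix.diagonal f) q : Matrix (Fin n) (Fin n) ℂ)
          = Matrix.diagonal g := by
        have h3 := Polynomial.aeval_algHom_apply (Matrix.diagonalAlgHom ℝ) f q
        have h4 : ∀ i, (Polynomial.aeval f q : Fin n → ℂ) i = Polynomial.aeval (f i) q :=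
          fun i => (Polynomial.aeval_algHom_apply (Pi.evalAlgHom ℝ (fun _ => ℂ) i) f q).symm
        have h5 : ∀ i, Polynomial.aeval (f i) q = g i := by
          intro i
          rw [hf i]
          have : ((lam i : ℝ) : ℂ) = algebraMap ℝ ℂ (lam i) := rfl
          rw [this, Polynomial.aeval_algebraMap_apply_eq_algebraMap_eval]
          rfl
        have h6 : (Matrix.diagonalAlgHom ℝ f : Matrix (Fin n) (Fin n) ℂ)
            = Matrix.diagonal f := rfl
        rw [← h6, h3]
        have h7 : (Polynomial.aeval f q : Fin n → ℂ) = g := funext fun i => (h4 i).trans (h5 i)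
        rw [show (Matrix.diagonalAlgHom ℝ (Polynomial.aeval f q) : Matrix (Fin n) (Fin n) ℂ)
            = Matrix.diagonal (Polynomial.aeval f q) from rfl, h7]
      rw [hB_def, h1, Polynomial.aeval_algHom_apply, h2, hφ]
    have hconj_mul : ∀ a b : Fin n → ℂ,
        (U * Matrix.diagonal a * star U) * (U * Matrix.diagonal b * star U)
          = U * Matrix.diagonal (a * b) * star U := by
      intro a b
      simp only [mul_assoc]
      rw [hstarU_mul, ← mul_assoc (Matrix.diagonal a), Matrix.diagonal_mul_diagonal]
      rfl
    have hBBM : B * B * M = U * Matrix.diagonal (g * g * f) * star U := by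
      rw [hBdiag, hspec, hconj_mul, hconj_mul]
    have htrBBM : Matrix.trace (B * B * M) = ∑ i, g i * g i * f i := by
      rw [hBBM, Matrix.trace_mul_comm, ← mul_assoc, hU2, one_mul, Matrix.trace_diagonal]
      rfl
    have hpow_mem : ∀ k : ℕ, M ^ k ∈ 𝒜 := by
      intro k
      induction k with
      | zero => simpa [pow_zero] using hone_mem
      | succ k ih => rw [pow_succ]; exact hmulmem _ ih _ hM_mem
    have hB_mem : B ∈ 𝒜 := by
      rw [hB_def]
      induction q using Polynomial.induction_on' with
      | add p r hp hr => rw [map_add]; exact Submodule.add_mem _ hp hr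
      | monomial k a =>
          rw [Polynomial.aeval_monomial, ← Algebra.smul_def,
            ← algebraMap_smul ℂ a (M ^ k)]
          exact Submodule.smul_mem _ _ (hpow_mem k)
    have hBB_mem : B * B ∈ 𝒜 := hmulmem _ hB_mem _ hB_mem
    have htrQ : Matrix.trace (B * B * M) = ∑ u ∈ T, ∑ v ∈ T, (B * B) u v := htr _ hBB_mem
    have hgstar : star g = g := by
      funext i
      simp [hg_def, Pi.star_apply, Complex.conj_ofReal]
    have hBherm : Bᴴ = B := by
      have : star B = B := by
        rw [hBdiag]
        rw [Matrix.star_mul, Matrix.star_mul, star_star]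
        rw [show star (Matrix.diagonal g) = (Matrix.diagonal g)ᴴ from rfl,
          Matrix.diagonal_conjTranspose, hgstar]
        simp only [mul_assoc]
      exact this
    have hQBB : ∑ u ∈ T, ∑ v ∈ T, (B * B) u v
        = ∑ j, star (∑ v ∈ T, B j v) * (∑ v ∈ T, B j v) := by
      have h1 : ∀ u v, (B * B) u v = ∑ j, star (B j u) * B j v := by
        intro u v
        have hBB : B * B = Bᴴ * B := by rw [hBherm]
        rw [hBB, Matrix.mul_apply]
        exact Finset.sum_congr rfl fun j _ => by rw [Matrix.conjTranspose_apply]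
      calc ∑ u ∈ T, ∑ v ∈ T, (B * B) u v
          = ∑ u ∈ T, ∑ v ∈ T, ∑ j, star (B j u) * B j v :=
            Finset.sum_congr rfl fun u _ => Finset.sum_congr rfl fun v _ => h1 u v
        _ = ∑ u ∈ T, ∑ j, ∑ v ∈ T, star (B j u) * B j v :=
            Finset.sum_congr rfl fun u _ => Finset.sum_comm
        _ = ∑ j, ∑ u ∈ T, ∑ v ∈ T, star (B j u) * B j v := Finset.sum_comm
        _ = ∑ j, (∑ u ∈ T, star (B j u)) * (∑ v ∈ T, B j v) := by
            refine Finset.sum_congr rfl fun j _ => ?_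
            rw [Finset.sum_mul_sum]
        _ = ∑ j, star (∑ v ∈ T, B j v) * (∑ v ∈ T, B j v) := by
            refine Finset.sum_congr rfl fun j _ => ?_
            congr 1
            rw [star_sum]
    have hRHSnn : 0 ≤ (Matrix.trace (B * B * M)).re := by
      rw [htrQ, hQBB, Complex.re_sum]
      refine Finset.sum_nonneg fun j _ => ?_
      set zc := ∑ v ∈ T, B j v
      rw [show star zc = (starRingEnd ℂ) zc from rfl, mul_comm, Complex.mul_conj]
      simp [Complex.normSq_nonneg]
    have hLHS : (Matrix.trace (B * B * M)).re = ∑ i, (q.eval (lam i))^2 * lam i := by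
      rw [htrBBM]
      have h1 : ∀ i, g i * g i * f i = (((q.eval (lam i))^2 * lam i : ℝ) : ℂ) := by
        intro i
        simp only [hg_def, hf i]
        push_cast
        ring
      rw [Finset.sum_congr rfl fun i _ => h1 i, ← Complex.ofReal_sum]
      exact Complex.ofReal_re _
    have hval : ∀ i, (q.eval (lam i))^2 * lam i = if lam i = μ then μ else 0 := by
      intro i
      rw [hqeval i]
      by_cases h : lam i = μ <;> simp [h]
    have hmuneg : μ < 0 := hi0
    have hsum_le : ∑ i, (q.eval (lam i))^2 * lam i ≤ μ := by
      rw [Finset.sum_congr rfl fun i _ => hval i, ← Finset.sum_filter,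
        Finset.sum_const, nsmul_eq_mul]
      have hcard1 : 1 ≤ ((Finset.univ.filter fun i => lam i = μ).card : ℝ) := by
        have : i0 ∈ Finset.univ.filter fun i => lam i = μ := by simp [hmu_def]
        have h2 : 0 < (Finset.univ.filter fun i => lam i = μ).card :=
          Finset.card_pos.mpr ⟨i0, this⟩
        exact_mod_cast h2
      nlinarith
    have h1 := hRHSnn
    rw [hLHS] at h1
    linarith
  -- the final quadratic form computation
  set xv : Fin n → ℂ := fun i => if i ∈ S then 1 else 0 with hxv_def
  set a : ℂ := (S.card : ℂ) / n with ha_def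
  set z : Fin n → ℂ := fun i => xv i - a with hz_def
  have hquad := quad_re_nonneg_of_eigenvalues_nonneg hMherm hev z
  have hstarz : star z = z := by
    funext i
    show star (z i) = z i
    simp only [hz_def, hxv_def, ha_def]
    rw [star_sub]
    congr 1
    · split <;> simp
    · simp
  have hMxv : ∀ i, ∑ j, M i j * xv j = ∑ j ∈ S, M i j := by
    intro i
    simp only [hxv_def, mul_ite, mul_one, mul_zero]
    rw [Finset.sum_ite_mem, Finset.univ_inter]
  have hxvsum : ∑ i, xv i = (S.card : ℂ) := by
    simp only [hxv_def]
    rw [Finset.sum_ite_mem, Finset.univ_inter]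
    simp
  have hSS : ∑ i ∈ S, ∑ j ∈ S, M i j = (S.card : ℂ) * ((T.card : ℂ) / n) := by
    have h1 : ∀ i ∈ S, ∑ j ∈ S, M i j = (T.card : ℂ) / n := by
      intro i hi
      rw [Finset.sum_eq_single_of_mem i hi
        (fun b hb hbne => hMoff i hi b hb (fun h => hbne h.symm))]
      exact hMdiag i
    rw [Finset.sum_congr rfl h1, Finset.sum_const, nsmul_eq_mul]
  have hcolM : ∀ j, ∑ i, M i j = (T.card : ℂ) ^ 2 / n := by
    intro j
    rw [Finset.sum_congr rfl fun i _ => hMsymm i j]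
    exact hrowM j
  have hMz : ∀ i, (M *ᵥ z) i = (∑ j ∈ S, M i j) - a * ((T.card : ℂ) ^ 2 / n) := by
    intro i
    show dotProduct (fun j => M i j) z = _
    rw [dotProduct]
    have h2 : ∀ j, M i j * z j = M i j * xv j - a * M i j := by
      intro j; simp only [hz_def]; ring
    rw [Finset.sum_congr rfl fun j _ => h2 j, Finset.sum_sub_distrib, hMxv i,
      ← Finset.mul_sum, hrowM i]
  have hpoint : ∀ i, z i * (M *ᵥ z) i
      = xv i * (∑ j ∈ S, M i j) - a * (∑ j ∈ S, M i j)
        - (a * ((T.card : ℂ) ^ 2 / n)) * xv i + a * (a * ((T.card : ℂ) ^ 2 / n)) := by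
    intro i
    rw [hMz i]
    simp only [hz_def]
    ring
  have hsum1 : ∑ i, xv i * (∑ j ∈ S, M i j) = (S.card : ℂ) * ((T.card : ℂ) / n) := by
    simp only [hxv_def, ite_mul, one_mul, zero_mul]
    rw [Finset.sum_ite_mem, Finset.univ_inter]
    exact hSS
  have hsum2 : ∑ i, (∑ j ∈ S, M i j) = (S.card : ℂ) * ((T.card : ℂ) ^ 2 / n) := by
    refine Finset.sum_comm.trans ?_
    rw [Finset.sum_congr rfl fun j _ => hcolM j, Finset.sum_const, nsmul_eq_mul]
  have hQval : dotProduct (star z) (M *ᵥ z)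
      = (S.card : ℂ) * ((T.card : ℂ) / n)
        - a * ((S.card : ℂ) * ((T.card : ℂ) ^ 2 / n))
        - (a * ((T.card : ℂ) ^ 2 / n)) * (S.card : ℂ)
        + (n : ℂ) * (a * (a * ((T.card : ℂ) ^ 2 / n))) := by
    rw [hstarz, dotProduct]
    rw [Finset.sum_congr rfl fun i _ => hpoint i]
    rw [Finset.sum_add_distrib, Finset.sum_sub_distrib, Finset.sum_sub_distrib]
    rw [hsum1, ← Finset.mul_sum, hsum2, ← Finset.mul_sum, hxvsum]
    rw [Finset.sum_const, Finset.card_univ, Fintype.card_fin, nsmul_eq_mul]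
  have hQreal : dotProduct (star z) (M *ᵥ z)
      = ((((S.card : ℝ) * T.card) / n - ((S.card : ℝ) * T.card) ^ 2 / (n : ℝ) ^ 2 : ℝ) : ℂ) := by
    rw [hQval, ha_def]
    push_cast
    simp only [div_eq_mul_inv]
    have hu : (n : ℂ) * (n : ℂ)⁻¹ = 1 := mul_inv_cancel₀ hn'
    linear_combination ((S.card : ℂ) * (T.card : ℂ)) ^ 2 * ((n : ℂ)⁻¹) ^ 2 * hu
  rw [hQreal] at hquad
  rw [Complex.ofReal_re] at hquad
  -- conclude
  by_cases hzero' : S.card * T.card = 0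
  · calc S.card * T.card = 0 := hzero'
      _ ≤ n := Nat.zero_le n
  · have hp1 : (1 : ℝ) ≤ (S.card : ℝ) * T.card := by
      have : 1 ≤ S.card * T.card := Nat.one_le_iff_ne_zero.mpr hzero'
      exact_mod_cast this
    have hnR : (0 : ℝ) < n := by exact_mod_cast hn
    have h2 : ((S.card : ℝ) * T.card) ^ 2 / (n : ℝ) ^ 2 ≤ ((S.card : ℝ) * T.card) / n := by
      linarith
    rw [div_le_div_iff₀ (by positivity) hnR] at h2
    have hppos : (0 : ℝ) < (S.card : ℝ) * T.card := lt_of_lt_of_le zero_lt_one hp1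
    have hfin : ((S.card : ℝ) * T.card) ≤ n := by nlinarith [mul_pos hppos hnR]
    exact_mod_cast hfin
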